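/- The modified Bessel function of the second kind satisfies the asymptotic K_ν(z) ~ √(π/(2z))·e^{-z} as z → ∞, i.e., lim_{z→∞} K_ν(z)/(√(π/(2z)) e^{-z}) = 1 for any fixed real order ν. -/

import Mathlib

open Filter Real MeasureTheory Set

/-- Modified Bessel function of the second kind of real order `ν`. -/
noncomputable def besselK (ν x : ℝ) : ℝ :=
  ∫ t in Set.Ioi (0 : ℝ), Real.exp (-x * Real.cosh t) * Real.cosh (ν * t)

private lemma cosh_sub_one (x : ℝ) : Real.cosh x - 1 = 2 * Real.sinh (x / 2) ^ 2 := by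
  have h : Real.cosh x = Real.cosh (2 * (x / 2)) := by ring_nf
  rw [h, Real.cosh_two_mul, Real.cosh_sq]
  ring

private lemma sq_half_le_cosh {x : ℝ} (hx : 0 ≤ x) : x ^ 2 / 2 ≤ Real.cosh x - 1 := by
  rw [cosh_sub_one]
  have h1 : x / 2 ≤ Real.sinh (x / 2) := Real.self_le_sinh_iff.2 (by linarith)
  have h2 : (x / 2) ^ 2 ≤ Real.sinh (x / 2) ^ 2 :=
    pow_le_pow_left₀ (by linarith) h1 2
  nlinarith

private lemma tendsto_sinh_div :
    Tendsto (fun x : ℝ => Real.sinh x / x) (nhdsWithin 0 {(0:ℝ)}ᶜ) (nhds 1) := by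
  have h := Real.hasDerivAt_sinh 0
  rw [hasDerivAt_iff_tendsto_slope] at h
  simp only [Real.cosh_zero] at h
  refine h.congr (fun x => ?_)
  simp [slope_def_field, div_eq_div_iff]

private lemma tendsto_sqrt_atTop : Tendsto Real.sqrt atTop atTop := by
  refine tendsto_atTop_atTop.2 fun b => ⟨b ^ 2 + 1, fun a ha => ?_⟩
  have hb2 : b ^ 2 ≤ a := by linarith
  calc b ≤ |b| := le_abs_self b
    _ = Real.sqrt (b ^ 2) := (Real.sqrt_sq_eq_abs b).symm
    _ ≤ Real.sqrt a := Real.sqrt_le_sqrt hb2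

private lemma integrable_gauss_lin (c : ℝ) :
    Integrable (fun s : ℝ => Real.exp (-(s ^ 2 / 2) + c * s)) := by
  have h1 : Integrable (fun s : ℝ => Real.exp (-(1/2 : ℝ) * s ^ 2)) :=
    integrable_exp_neg_mul_sq (by norm_num)
  have h2 := (h1.comp_sub_right c).const_mul (Real.exp (c ^ 2 / 2))
  refine h2.congr (Eventually.of_forall fun s => ?_)
  show Real.exp (c ^ 2 / 2) * Real.exp (-(1/2 : ℝ) * (s - c) ^ 2)
      = Real.exp (-(s ^ 2 / 2) + c * s)
  rw [← Real.exp_add]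
  congr 1
  ring

theorem stmt_9 (ν : ℝ) :
    Tendsto (fun z : ℝ => besselK ν z / (Real.sqrt (π / (2 * z)) * Real.exp (-z)))
      atTop (nhds 1) := by
  -- the rescaled integrand
  set g : ℝ → ℝ → ℝ := fun z s =>
    Real.exp (-(z * (Real.cosh (s / Real.sqrt z) - 1))) *
      Real.cosh (ν * (s / Real.sqrt z)) with hg
  have hπ2 : (0:ℝ) < Real.sqrt (π / 2) := Real.sqrt_pos.2 (by positivity)
  -- Step B : the Gaussian integral
  have hgauss : (∫ s in Ioi (0:ℝ), Real.exp (-(s ^ 2 / 2))) = Real.sqrt (π / 2) := by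
    have h := integral_gaussian_Ioi (1/2 : ℝ)
    have heq : (∫ s in Ioi (0:ℝ), Real.exp (-(s ^ 2 / 2)))
        = ∫ s in Ioi (0:ℝ), Real.exp (-(1/2 : ℝ) * s ^ 2) := by
      refine setIntegral_congr_fun measurableSet_Ioi fun s _ => ?_
      ring_nf
    rw [heq, h]
    rw [show π / (1/2 : ℝ) = (π / 2) * 2 ^ 2 by ring,
      Real.sqrt_mul (by positivity), Real.sqrt_sq (by norm_num)]
    ring
  -- Step A : dominated convergence
  have hF : Tendsto (fun z => ∫ s in Ioi (0:ℝ), g z s) atTop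
      (nhds (Real.sqrt (π / 2))) := by
    rw [← hgauss]
    refine tendsto_integral_filter_of_dominated_convergence
      (fun s => Real.exp (-(s ^ 2 / 2)) * Real.cosh (ν * s)) ?_ ?_ ?_ ?_
    · filter_upwards with z
      exact (Continuous.mul (by continuity) (by continuity)).aestronglyMeasurable
    · filter_upwards [eventually_ge_atTop (1:ℝ)] with z hz
      have hz0 : (0:ℝ) < z := lt_of_lt_of_le one_pos hz
      have hsz : (1:ℝ) ≤ Real.sqrt z := by
        rw [show (1:ℝ) = Real.sqrt 1 from (Real.sqrt_one).symm]
        exact Real.sqrt_le_sqrt hz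
      rw [ae_restrict_iff' measurableSet_Ioi]
      filter_upwards with s hs
      have hs0 : (0:ℝ) < s := hs
      have hsq : Real.sqrt z > 0 := lt_of_lt_of_le one_pos hsz
      have hkey : s ^ 2 / 2 ≤ z * (Real.cosh (s / Real.sqrt z) - 1) := by
        have h1 := sq_half_le_cosh (x := s / Real.sqrt z)
          (div_nonneg hs0.le hsq.le)
        have h2 : (s / Real.sqrt z) ^ 2 = s ^ 2 / z := by
          rw [div_pow, Real.sq_sqrt hz0.le]
        have h3 : z * ((s / Real.sqrt z) ^ 2 / 2) = s ^ 2 / 2 := by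
          rw [h2]; field_simp
        nlinarith [mul_le_mul_of_nonneg_left h1 hz0.le]
      have hb1 : Real.exp (-(z * (Real.cosh (s / Real.sqrt z) - 1)))
          ≤ Real.exp (-(s ^ 2 / 2)) := Real.exp_le_exp.2 (by linarith)
      have hb2 : Real.cosh (ν * (s / Real.sqrt z)) ≤ Real.cosh (ν * s) := by
        rw [Real.cosh_le_cosh]
        rw [abs_mul, abs_mul, abs_div, abs_of_pos hs0, abs_of_pos hsq]
        refine mul_le_mul_of_nonneg_left ?_ (abs_nonneg ν)
        calc s / Real.sqrt z ≤ s / 1 := by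
              exact div_le_div_of_nonneg_left hs0.le one_pos hsz
          _ = s := div_one s
      have hpos : (0:ℝ) ≤ g z s := by
        apply mul_nonneg (Real.exp_pos _).le
        exact le_trans zero_le_one (Real.one_le_cosh _)
      rw [Real.norm_eq_abs, abs_of_nonneg hpos]
      exact mul_le_mul hb1 hb2 (le_trans zero_le_one (Real.one_le_cosh _))
        (Real.exp_pos _).le
    · -- integrability of the bound
      have : Integrable (fun s : ℝ => Real.exp (-(s ^ 2 / 2)) * Real.cosh (ν * s)) := by
        have h := ((integrable_gauss_lin ν).add (integrable_gauss_lin (-ν))).div_const 2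
        refine h.congr (Eventually.of_forall fun s => ?_)
        simp only [Pi.add_apply]
        rw [Real.cosh_eq, Real.exp_add, Real.exp_add,
          show -ν * s = -(ν * s) by ring]
        ring
      exact this.integrableOn
    · -- pointwise limit
      rw [ae_restrict_iff' measurableSet_Ioi]
      filter_upwards with s hs
      have hs0 : (0:ℝ) < s := hs
      -- the argument tends to 0
      have hsqt : Tendsto (fun z : ℝ => s / Real.sqrt z) atTop (nhds 0) :=
        Tendsto.div_atTop tendsto_const_nhds _root_.tendsto_sqrt_atTop
      -- exponent limit
      have hexp : Tendsto (fun z : ℝ => z * (Real.cosh (s / Real.sqrt z) - 1))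
          atTop (nhds (s ^ 2 / 2)) := by
        have hu : Tendsto (fun z : ℝ => s / (2 * Real.sqrt z)) atTop
            (nhdsWithin 0 {(0:ℝ)}ᶜ) := by
          rw [tendsto_nhdsWithin_iff]
          constructor
          · exact Tendsto.div_atTop tendsto_const_nhds
              (_root_.tendsto_sqrt_atTop.const_mul_atTop two_pos)
          · filter_upwards [eventually_gt_atTop (0:ℝ)] with z hz
            have : 0 < s / (2 * Real.sqrt z) := by positivity
            exact fun h => absurd h.symm this.ne
        have hratio : Tendsto
            (fun z : ℝ => Real.sinh (s / (2 * Real.sqrt z)) / (s / (2 * Real.sqrt z)))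
            atTop (nhds 1) := tendsto_sinh_div.comp hu
        have hlim : Tendsto
            (fun z : ℝ => s ^ 2 / 2 *
              (Real.sinh (s / (2 * Real.sqrt z)) / (s / (2 * Real.sqrt z))) ^ 2)
            atTop (nhds (s ^ 2 / 2)) := by
          have := ((hratio.pow 2).const_mul (s ^ 2 / 2))
          simpa using this
        refine hlim.congr' ?_
        filter_upwards [eventually_gt_atTop (0:ℝ)] with z hz
        have hsq : 0 < Real.sqrt z := Real.sqrt_pos.2 hz
        have hu0 : s / (2 * Real.sqrt z) ≠ 0 := by positivity
        rw [cosh_sub_one]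
        have harg : s / Real.sqrt z / 2 = s / (2 * Real.sqrt z) := by ring
        rw [harg, div_pow, div_pow]
        have h4 : (2 * Real.sqrt z) ^ 2 = 4 * z := by
          rw [mul_pow, Real.sq_sqrt hz.le]; norm_num
        rw [h4]
        field_simp
        ring
      have hcosh : Tendsto (fun z : ℝ => Real.cosh (ν * (s / Real.sqrt z)))
          atTop (nhds 1) := by
        have h0 : Tendsto (fun z : ℝ => ν * (s / Real.sqrt z)) atTop (nhds 0) := by
          simpa using hsqt.const_mul ν
        have := (Real.continuous_cosh.tendsto 0).comp h0
        rw [Real.cosh_zero] at this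
        exact this
      have hexp' : Tendsto (fun z : ℝ =>
          Real.exp (-(z * (Real.cosh (s / Real.sqrt z) - 1)))) atTop
          (nhds (Real.exp (-(s ^ 2 / 2)))) :=
        (Real.continuous_exp.tendsto _).comp hexp.neg
      simpa using hexp'.mul hcosh
  -- Step C : identification of the ratio
  have hEq : ∀ᶠ z in atTop, besselK ν z / (Real.sqrt (π / (2 * z)) * Real.exp (-z))
      = (∫ s in Ioi (0:ℝ), g z s) / Real.sqrt (π / 2) := by
    filter_upwards [eventually_gt_atTop (0:ℝ)] with z hz
    have hsq : 0 < Real.sqrt z := Real.sqrt_pos.2 hz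
    -- change of variables
    have hsub : (∫ s in Ioi (0:ℝ), g z s)
        = Real.sqrt z * ∫ t in Ioi (0:ℝ),
            Real.exp (-(z * (Real.cosh t - 1))) * Real.cosh (ν * t) := by
      have h := integral_comp_mul_left_Ioi
        (fun t => Real.exp (-(z * (Real.cosh t - 1))) * Real.cosh (ν * t)) 0
        (inv_pos.2 hsq)
      simp only [mul_zero, smul_eq_mul, inv_inv] at h
      rw [← h]
      refine setIntegral_congr_fun measurableSet_Ioi fun s _ => ?_
      rw [hg]
      simp only []
      rw [div_eq_inv_mul]
    have hK : (∫ t in Ioi (0:ℝ),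
          Real.exp (-(z * (Real.cosh t - 1))) * Real.cosh (ν * t))
        = Real.exp z * besselK ν z := by
      rw [besselK, ← integral_const_mul]
      refine setIntegral_congr_fun measurableSet_Ioi fun t _ => ?_
      rw [← mul_assoc, ← Real.exp_add]
      ring_nf
    have hsqrt : Real.sqrt (π / (2 * z)) = Real.sqrt (π / 2) / Real.sqrt z := by
      rw [show π / (2 * z) = (π / 2) / z by ring, Real.sqrt_div (by positivity)]
    rw [hsub, hK, hsqrt, Real.exp_neg]
    have hE := Real.exp_pos z
    field_simp
  have : Tendsto (fun z => (∫ s in Ioi (0:ℝ), g z s) / Real.sqrt (π / 2))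
      atTop (nhds (Real.sqrt (π / 2) / Real.sqrt (π / 2))) := hF.div_const _
  rw [div_self hπ2.ne'] at this
  exact this.congr' (hEq.mono fun _ h => h.symm)
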